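/- For real symmetric positive definite n×n matrices A and B, the squared Bures-Wasserstein distance satisfies ρ²(A,B) = Tr(A) + Tr(B) − 2·max{Tr(√A·√B·U) : U ∈ O(n)}. -/

import Mathlib

open Matrix BigOperators

open Classical in
noncomputable def msqrt {n : ℕ} (M : Matrix (Fin n) (Fin n) ℝ) : Matrix (Fin n) (Fin n) ℝ :=
  if h : M.PosSemidef then (h.1.eigenvectorUnitary : Matrix (Fin n) (Fin n) ℝ) *
    diagonal ((↑) ∘ (√·) ∘ h.1.eigenvalues) * (star h.1.eigenvectorUnitary : Matrix (Fin n) (Fin n) ℝ) else 0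

private lemma msqrt_psd {n : ℕ} {M : Matrix (Fin n) (Fin n) ℝ} (h : M.PosSemidef) :
    (msqrt M).PosSemidef := by
  rw [msqrt, dif_pos h]
  have hD : (diagonal ((↑) ∘ (√·) ∘ h.1.eigenvalues) : Matrix (Fin n) (Fin n) ℝ).PosSemidef := by
    rw [posSemidef_diagonal_iff]
    intro i
    simp [Real.sqrt_nonneg]
  have := hD.mul_mul_conjTranspose_same (h.1.eigenvectorUnitary : Matrix (Fin n) (Fin n) ℝ)
  simpa [star_eq_conjTranspose] using this

private lemma msqrt_mul_self {n : ℕ} {M : Matrix (Fin n) (Fin n) ℝ} (h : M.PosSemidef) :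
    msqrt M * msqrt M = M := by
  rw [msqrt, dif_pos h]
  set U : Matrix (Fin n) (Fin n) ℝ := (h.1.eigenvectorUnitary : Matrix (Fin n) (Fin n) ℝ)
  have hU : star U * U = 1 := h.1.eigenvectorUnitary.2.1
  have hsp := h.1.spectral_theorem
  rw [Unitary.conjStarAlgAut_apply] at hsp
  calc U * diagonal ((↑) ∘ (√·) ∘ h.1.eigenvalues) * star U *
        (U * diagonal ((↑) ∘ (√·) ∘ h.1.eigenvalues) * star U)
      = U * (diagonal ((↑) ∘ (√·) ∘ h.1.eigenvalues) * (star U * U) *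
        diagonal ((↑) ∘ (√·) ∘ h.1.eigenvalues)) * star U := by noncomm_ring
    _ = M := by
      rw [hU, Matrix.mul_one, diagonal_mul_diagonal]
      refine Eq.trans ?_ hsp.symm
      congr 2
      congr 1
      funext i
      simp [Real.mul_self_sqrt (h.eigenvalues_nonneg i)]


private lemma star_eq_t {n : ℕ} (M : Matrix (Fin n) (Fin n) ℝ) : star M = Mᵀ :=
  conjTranspose_eq_transpose_of_trivial M

private lemma ct_eq_t {n : ℕ} (M : Matrix (Fin n) (Fin n) ℝ) : Mᴴ = Mᵀ :=
  conjTranspose_eq_transpose_of_trivial M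

/-- For `P` PSD and `W` orthogonal, `tr (P W) ≤ tr P`. -/
private lemma trace_mul_le_trace {n : ℕ} {P W : Matrix (Fin n) (Fin n) ℝ}
    (hP : P.PosSemidef) (hW : Wᵀ * W = 1) : (P * W).trace ≤ P.trace := by
  have hH := hP.1
  set Q : Matrix (Fin n) (Fin n) ℝ := (hH.eigenvectorUnitary : Matrix (Fin n) (Fin n) ℝ) with hQ
  have hQmem := hH.eigenvectorUnitary.2
  have hQ1 : Qᵀ * Q = 1 := by rw [← star_eq_t]; exact hQmem.1
  have hQ2 : Q * Qᵀ = 1 := by rw [← star_eq_t]; exact hQmem.2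
  have hspec : P = Q * Matrix.diagonal hH.eigenvalues * Qᵀ := by
    have := hH.spectral_theorem
    rw [Unitary.conjStarAlgAut_apply, star_eq_t] at this
    simpa [RCLike.ofReal_real_eq_id] using this
  set D : Matrix (Fin n) (Fin n) ℝ := Matrix.diagonal hH.eigenvalues with hD
  set V : Matrix (Fin n) (Fin n) ℝ := Qᵀ * W * Q with hV
  have hVo : Vᵀ * V = 1 := by
    have h1 : Vᵀ * V = Qᵀ * Wᵀ * (Q * Qᵀ) * (W * Q) := by
      simp only [hV, transpose_mul, transpose_transpose]; noncomm_ring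
    rw [h1, hQ2, Matrix.mul_one]
    have h2 : Qᵀ * Wᵀ * (W * Q) = Qᵀ * (Wᵀ * W) * Q := by noncomm_ring
    rw [h2, hW, Matrix.mul_one, hQ1]
  have htr1 : (P * W).trace = (D * V).trace := by
    rw [hspec, show Q * D * Qᵀ * W = Q * (D * Qᵀ * W) by noncomm_ring, trace_mul_comm, hV]
    congr 1; noncomm_ring
  have htr2 : P.trace = D.trace := by
    rw [hspec, show Q * D * Qᵀ = Q * (D * Qᵀ) by noncomm_ring, trace_mul_comm,
      show D * Qᵀ * Q = D * (Qᵀ * Q) by noncomm_ring, hQ1, Matrix.mul_one]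
  rw [htr1, htr2]
  have hVii : ∀ i, V i i ≤ 1 := by
    intro i
    have h1 : (Vᵀ * V) i i = (1 : Matrix (Fin n) (Fin n) ℝ) i i := by rw [hVo]
    have h2 : ∑ j, V j i * V j i = 1 := by
      simpa [Matrix.mul_apply, Matrix.one_apply] using h1
    have h3 : V i i * V i i ≤ 1 := by
      rw [← h2]
      exact Finset.single_le_sum (fun j _ => mul_self_nonneg (V j i)) (Finset.mem_univ i)
    nlinarith
  have hd : ∀ i, 0 ≤ hH.eigenvalues i := hP.eigenvalues_nonneg
  calc (D * V).trace = ∑ i, hH.eigenvalues i * V i i := by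
        simp [Matrix.trace, Matrix.diag, hD, Matrix.diagonal_mul]
    _ ≤ ∑ i, hH.eigenvalues i := by
        apply Finset.sum_le_sum
        intro i _
        calc hH.eigenvalues i * V i i ≤ hH.eigenvalues i * 1 :=
              mul_le_mul_of_nonneg_left (hVii i) (hd i)
          _ = hH.eigenvalues i := mul_one _
    _ = D.trace := by simp [Matrix.trace, Matrix.diag, hD]

noncomputable def fnorm {n : ℕ} (A : Matrix (Fin n) (Fin n) ℝ) : ℝ :=
  Real.sqrt (∑ i, ∑ j, (A i j) ^ 2)

theorem stmt_14 {n : ℕ} (A B : Matrix (Fin n) (Fin n) ℝ)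
    (hA : A.PosDef) (hB : B.PosDef) :
    ∃ m : ℝ, IsGreatest {t : ℝ | ∃ U : Matrix (Fin n) (Fin n) ℝ,
        Uᵀ * U = 1 ∧ t = (msqrt A * msqrt B * U).trace} m ∧
      A.trace + B.trace - 2 * (msqrt (msqrt A * B * msqrt A)).trace =
        A.trace + B.trace - 2 * m := by
  have hA' := hA.posSemidef
  have hB' := hB.posSemidef
  set SA : Matrix (Fin n) (Fin n) ℝ := msqrt A with hSAdef
  set SB : Matrix (Fin n) (Fin n) ℝ := msqrt B with hSBdef
  have hmA : msqrt A = SA := rfl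
  have hmB : msqrt B = SB := rfl
  have hSA : SA.PosSemidef := msqrt_psd hA'
  have hSB : SB.PosSemidef := msqrt_psd hB'
  have hSAt : SAᵀ = SA := by rw [← star_eq_t]; exact hSA.1
  have hSBt : SBᵀ = SB := by rw [← star_eq_t]; exact hSB.1
  have hSASA : SA * SA = A := msqrt_mul_self hA'
  have hSBSB : SB * SB = B := msqrt_mul_self hB'
  set C : Matrix (Fin n) (Fin n) ℝ := SA * B * SA with hCdef
  have hC : C.PosSemidef := by
    have := hB'.conjTranspose_mul_mul_same SA
    rwa [ct_eq_t, hSAt] at this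
  have hmC : msqrt (msqrt A * B * msqrt A) = msqrt C := by rw [hmA, ← hCdef]
  set P : Matrix (Fin n) (Fin n) ℝ := msqrt C with hPdef
  have hP : P.PosSemidef := msqrt_psd hC
  have hPt : Pᵀ = P := by rw [← star_eq_t]; exact hP.1
  have hPP : P * P = C := msqrt_mul_self hC
  -- determinants
  have hAd : A.det ≠ 0 := hA.det_pos.ne'
  have hBd : B.det ≠ 0 := hB.det_pos.ne'
  have hSAd : SA.det ≠ 0 := by
    intro h
    apply hAd
    rw [← hSASA, det_mul, h, mul_zero]
  have hSBd : SB.det ≠ 0 := by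
    intro h
    apply hBd
    rw [← hSBSB, det_mul, h, mul_zero]
  have hCd : C.det ≠ 0 := by
    rw [hCdef, det_mul, det_mul]
    exact mul_ne_zero (mul_ne_zero hSAd hBd) hSAd
  have hPd : P.det ≠ 0 := by
    intro h
    apply hCd
    rw [← hPP, det_mul, h, mul_zero]
  set M : Matrix (Fin n) (Fin n) ℝ := SA * SB with hMdef
  have hMt : Mᵀ = SB * SA := by rw [hMdef, transpose_mul, hSAt, hSBt]
  have hMMt : M * Mᵀ = C := by
    rw [hMdef, hMt, show SA * SB * (SB * SA) = SA * (SB * SB) * SA by noncomm_ring, hSBSB]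
  have hMd : M.det ≠ 0 := by rw [hMdef, det_mul]; exact mul_ne_zero hSAd hSBd
  have hPinv : P * P⁻¹ = 1 := mul_nonsing_inv P (isUnit_iff_ne_zero.mpr hPd)
  have hPinv' : P⁻¹ * P = 1 := nonsing_inv_mul P (isUnit_iff_ne_zero.mpr hPd)
  have hPinvT : (P⁻¹)ᵀ = P⁻¹ := by rw [transpose_nonsing_inv, hPt]
  refine ⟨P.trace, ⟨⟨Mᵀ * P⁻¹, ?_, ?_⟩, ?_⟩, by rw [hmC]⟩
  · -- orthogonality of the maximizing U
    rw [transpose_mul, transpose_transpose, hPinvT]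
    calc P⁻¹ * M * (Mᵀ * P⁻¹) = P⁻¹ * (M * Mᵀ) * P⁻¹ := by noncomm_ring
      _ = P⁻¹ * (P * P) * P⁻¹ := by rw [hMMt, hPP]
      _ = (P⁻¹ * P) * (P * P⁻¹) := by noncomm_ring
      _ = 1 := by rw [hPinv, hPinv', mul_one]
  · -- value at the maximizer
    rw [show M * (Mᵀ * P⁻¹) = (M * Mᵀ) * P⁻¹ by noncomm_ring, hMMt, ← hPP,
      show P * P * P⁻¹ = P * (P * P⁻¹) by noncomm_ring, hPinv, Matrix.mul_one]
  · -- upper bound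
    rintro t ⟨U, hU, rfl⟩
    set W : Matrix (Fin n) (Fin n) ℝ := P⁻¹ * M * U with hWdef
    have hMinv : M⁻¹ * M = 1 := nonsing_inv_mul M (isUnit_iff_ne_zero.mpr hMd)
    have hMtinv : Mᵀ * (Mᵀ)⁻¹ = 1 := by
      apply mul_nonsing_inv
      rw [det_transpose]
      exact isUnit_iff_ne_zero.mpr hMd
    have hCinv : P⁻¹ * P⁻¹ = (Mᵀ)⁻¹ * M⁻¹ := by
      rw [← Matrix.mul_inv_rev, ← Matrix.mul_inv_rev, hPP, ← hMMt]
    have hWo : Wᵀ * W = 1 := by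
      rw [hWdef]
      calc (P⁻¹ * M * U)ᵀ * (P⁻¹ * M * U) = Uᵀ * (Mᵀ * P⁻¹) * (P⁻¹ * M * U) := by
            rw [transpose_mul, transpose_mul, hPinvT]
        _ = Uᵀ * (Mᵀ * (P⁻¹ * P⁻¹) * M) * U := by noncomm_ring
        _ = Uᵀ * (Mᵀ * ((Mᵀ)⁻¹ * M⁻¹) * M) * U := by rw [hCinv]
        _ = Uᵀ * ((Mᵀ * (Mᵀ)⁻¹) * (M⁻¹ * M)) * U := by noncomm_ring
        _ = Uᵀ * U := by rw [hMtinv, hMinv, mul_one, Matrix.mul_one]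
        _ = 1 := hU
    have hPW : P * W = M * U := by
      rw [hWdef, show P * (P⁻¹ * M * U) = (P * P⁻¹) * (M * U) by noncomm_ring, hPinv,
        Matrix.one_mul]
    rw [← hPW]
    exact trace_mul_le_trace hP hWo
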